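/- arXiv:2107.03745 — 2 statements merged into one kernel-verified Lean document; each statement's English description precedes it below -/
import Mathlib

section
/- The three matrices r₁ = [[1,0,0],[0,0,1],[0,1,0]], r₂ = [[1,0,0],[0,1,0],[0,0,-1]], and r₃ = (1/2)[[1,-1,-α],[-1,1,-α],[-ᾱ,-ᾱ,0]] (with α = (1+i√7)/2) satisfy the relations r₁² = r₂² = r₃² = (r₁r₂)⁴ = (r₂r₃)⁴ = (r₃r₁)³ = (r₁r₂r₁r₃)³ = 1. -/
noncomputable section

def Kalpha : ℂ := (1 + Complex.I * Real.sqrt 7) / 2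
def Kalphabar : ℂ := (1 - Complex.I * Real.sqrt 7) / 2

def r1 : Matrix (Fin 3) (Fin 3) ℂ := !![1,0,0; 0,0,1; 0,1,0]
def r2 : Matrix (Fin 3) (Fin 3) ℂ := !![1,0,0; 0,1,0; 0,0,-1]
def r3 : Matrix (Fin 3) (Fin 3) ℂ :=
  (1/2 : ℂ) • !![1,-1,-Kalpha; -1,1,-Kalpha; -Kalphabar,-Kalphabar,0]

lemma Kalpha_quad : Kalpha ^ 2 = Kalpha - 2 := by
  have hI : Complex.I ^ 2 = -1 := Complex.I_sq
  have hs : ((Real.sqrt 7 : ℝ) : ℂ) ^ 2 = 7 := by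
    rw [← Complex.ofReal_pow, Real.sq_sqrt (by norm_num : (7:ℝ) ≥ 0)]; norm_num
  unfold Kalpha
  linear_combination (((Real.sqrt 7 : ℝ) : ℂ)^2/4) * hI - (1/4) * hs

lemma Kalphabar_eq : Kalphabar = 1 - Kalpha := by
  unfold Kalpha Kalphabar; ring

set_option maxHeartbeats 1000000 in
/-- The generators `r₁, r₂, r₃` of the reflection group `G₃₃₆` satisfy
the Shephard–Todd relations. -/
theorem generators_relations :
    r1 ^ 2 = 1 ∧ r2 ^ 2 = 1 ∧ r3 ^ 2 = 1 ∧
    (r1 * r2) ^ 4 = 1 ∧ (r2 * r3) ^ 4 = 1 ∧ (r3 * r1) ^ 3 = 1 ∧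
    (r1 * r2 * r1 * r3) ^ 3 = 1 := by
  have hq := Kalpha_quad
  have hb := Kalphabar_eq
  have h1 : r1 ^ 2 = 1 := by
    ext i j
    fin_cases i <;> fin_cases j <;>
      simp [r1, pow_succ, Matrix.mul_apply, Fin.sum_univ_three, Matrix.one_apply, Matrix.vecHead, Matrix.vecTail]
  have h2 : r2 ^ 2 = 1 := by
    ext i j
    fin_cases i <;> fin_cases j <;>
      simp [r2, pow_succ, Matrix.mul_apply, Fin.sum_univ_three, Matrix.one_apply, Matrix.vecHead, Matrix.vecTail]
  have h3 : r3 ^ 2 = 1 := by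
    ext i j
    fin_cases i <;> fin_cases j <;>
      simp [r3, hb, pow_succ, Matrix.mul_apply, Fin.sum_univ_three, Matrix.one_apply, Matrix.vecHead, Matrix.vecTail] <;>
      (try ring_nf) <;> (try simp only [hq]) <;> (try ring_nf) <;> (try norm_num)
  have h12 : (r1 * r2) ^ 4 = 1 := by
    have e : r1 * r2 = !![1,0,0; 0,0,-1; 0,1,0] := by
      ext i j
      fin_cases i <;> fin_cases j <;>
        simp [r1, r2, Matrix.mul_apply, Fin.sum_univ_three, Matrix.vecHead, Matrix.vecTail]
    rw [e]
    ext i j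
    fin_cases i <;> fin_cases j <;>
      simp [pow_succ, Matrix.mul_apply, Fin.sum_univ_three, Matrix.one_apply, Matrix.vecHead, Matrix.vecTail]
  have h23 : (r2 * r3) ^ 4 = 1 := by
    have eA : r2 * r3 = !![(1/2 : ℂ), -1/2, -Kalpha/2;
                           -1/2, 1/2, -Kalpha/2;
                           1/2 - Kalpha/2, 1/2 - Kalpha/2, 0] := by
      ext i j
      fin_cases i <;> fin_cases j <;>
        simp [r2, r3, hb, Matrix.mul_apply, Fin.sum_univ_three, Matrix.vecHead, Matrix.vecTail] <;> ring
    have eA2 : (r2 * r3) * (r2 * r3) = !![(0:ℂ),-1,0; -1,0,0; 0,0,-1] := by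
      rw [eA]
      ext i j
      fin_cases i <;> fin_cases j <;>
        simp [Matrix.mul_apply, Fin.sum_univ_three, Matrix.vecHead, Matrix.vecTail] <;>
        (try ring_nf) <;> (try simp only [hq]) <;> (try ring_nf) <;> (try norm_num)
    have : (r2 * r3) ^ 4 = ((r2 * r3) * (r2 * r3)) * ((r2 * r3) * (r2 * r3)) := by
      rw [show (4:ℕ) = 2*2 from rfl, pow_mul, sq, sq]
    rw [this, eA2]
    ext i j
    fin_cases i <;> fin_cases j <;>
      simp [Matrix.mul_apply, Fin.sum_univ_three, Matrix.one_apply, Matrix.vecHead, Matrix.vecTail]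
  have h31 : (r3 * r1) ^ 3 = 1 := by
    have eB : r3 * r1 = !![(1/2 : ℂ), -Kalpha/2, -1/2;
                           -1/2, -Kalpha/2, 1/2;
                           -1/2 + Kalpha/2, 0, -1/2 + Kalpha/2] := by
      ext i j
      fin_cases i <;> fin_cases j <;>
        simp [r1, r3, hb, Matrix.mul_apply, Fin.sum_univ_three, Matrix.vecHead, Matrix.vecTail] <;> ring
    have eB2 : (r3 * r1) * (r3 * r1) = !![(1/2 : ℂ), -1/2, -Kalpha/2;
                           -1/2 + Kalpha/2, -1/2 + Kalpha/2, 0;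
                           -1/2, 1/2, -Kalpha/2] := by
      rw [eB]
      ext i j
      fin_cases i <;> fin_cases j <;>
        simp [Matrix.mul_apply, Fin.sum_univ_three, Matrix.vecHead, Matrix.vecTail] <;>
        (try ring_nf) <;> (try simp only [hq]) <;> (try ring_nf) <;> (try norm_num)
    have : (r3 * r1) ^ 3 = ((r3 * r1) * (r3 * r1)) * (r3 * r1) := by rw [pow_succ, sq]
    rw [this, eB2, eB]
    ext i j
    fin_cases i <;> fin_cases j <;>
      simp [Matrix.mul_apply, Fin.sum_univ_three, Matrix.one_apply, Matrix.vecHead, Matrix.vecTail] <;>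
      (try ring_nf) <;> (try simp only [hq]) <;> (try ring_nf) <;> (try norm_num)
  have h1213 : (r1 * r2 * r1 * r3) ^ 3 = 1 := by
    have eC : r1 * r2 * r1 * r3 = !![(1/2 : ℂ), -1/2, -Kalpha/2;
                           1/2, -1/2, Kalpha/2;
                           -1/2 + Kalpha/2, -1/2 + Kalpha/2, 0] := by
      ext i j
      fin_cases i <;> fin_cases j <;>
        simp [r1, r2, r3, hb, Matrix.mul_apply, Fin.sum_univ_three, Matrix.vecHead, Matrix.vecTail] <;> ring
    have eC2 : (r1 * r2 * r1 * r3) * (r1 * r2 * r1 * r3) =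
        !![(1/2 : ℂ), 1/2, -Kalpha/2;
           -1/2, -1/2, -Kalpha/2;
           -1/2 + Kalpha/2, 1/2 - Kalpha/2, 0] := by
      rw [eC]
      ext i j
      fin_cases i <;> fin_cases j <;>
        simp [Matrix.mul_apply, Fin.sum_univ_three, Matrix.vecHead, Matrix.vecTail] <;>
        (try ring_nf) <;> (try simp only [hq]) <;> (try ring_nf) <;> (try norm_num)
    have : (r1 * r2 * r1 * r3) ^ 3 =
        ((r1 * r2 * r1 * r3) * (r1 * r2 * r1 * r3)) * (r1 * r2 * r1 * r3) := by rw [pow_succ, sq]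
    rw [this, eC2, eC]
    ext i j
    fin_cases i <;> fin_cases j <;>
      simp [Matrix.mul_apply, Fin.sum_univ_three, Matrix.one_apply, Matrix.vecHead, Matrix.vecTail] <;>
      (try ring_nf) <;> (try simp only [hq]) <;> (try ring_nf) <;> (try norm_num)
  exact ⟨h1, h2, h3, h12, h23, h31, h1213⟩

end
end

section
/- The point η₁ = (i√7/7, (7+i√7)/14, 1 − 2i√7/7) ∈ C³ satisfies g₇(η₁) − η₁ ∈ Λ, i.e. the image of η₁ in J = C³/Λ is a fixed point of g₇; moreover η₁ ∉ Λ, so this fixed point is nonzero. -/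
noncomputable section

def Ke1 : Fin 3 → ℂ := ![0, Kalpha, Kalpha]
def Ke2 : Fin 3 → ℂ := ![0, 0, 2]
def Ke3 : Fin 3 → ℂ := ![1, 1, Kalphabar]

def LambdaZ : Submodule ℤ (Fin 3 → ℂ) :=
  Submodule.span ℤ {Ke1, Ke2, Ke3, Kalpha • Ke1, Kalpha • Ke2, Kalpha • Ke3}

def g7 : Matrix (Fin 3) (Fin 3) ℂ :=
  (1/2 : ℂ) • !![-1,1,Kalpha; -Kalphabar,-Kalphabar,0; 1,-1,Kalpha]

def eta1 : Fin 3 → ℂ :=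
  ![Complex.I * Real.sqrt 7 / 7,
    (7 + Complex.I * Real.sqrt 7) / 14,
    1 - 2 * Complex.I * Real.sqrt 7 / 7]

def psi (v : Fin 3 → ℂ) : ℝ := 7 * (v 0).re - Real.sqrt 7 * (v 0).im

lemma hs7 : (Real.sqrt 7 : ℂ) * (Real.sqrt 7 : ℂ) = 7 := by
  have h : Real.sqrt 7 * Real.sqrt 7 = 7 := Real.mul_self_sqrt (by norm_num)
  exact_mod_cast h

lemma hs2 : ((Real.sqrt 7 : ℝ) : ℂ) ^ 2 = 7 := by rw [sq]; exact hs7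

lemma psi_add (x y : Fin 3 → ℂ) : psi (x + y) = psi x + psi y := by
  simp [psi]; ring

lemma psi_zsmul (n : ℤ) (x : Fin 3 → ℂ) : psi (n • x) = n * psi x := by
  simp [psi]; ring

/-- `η₁` is a fixed point of `g₇` on `J = ℂ³/Λ`: `g₇η₁ - η₁ ∈ Λ`;
moreover `η₁ ∉ Λ`, so this fixed point is nonzero. -/
theorem eta1_is_nonzero_fixed_point_of_g7 :
    g7.mulVec eta1 - eta1 ∈ LambdaZ ∧ eta1 ∉ LambdaZ := by
  constructor
  · have hd : g7.mulVec eta1 - eta1 =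
        (-1 : ℤ) • Ke1 + Ke3 + Kalpha • Ke1 + Kalpha • Ke2 := by
      funext i
      fin_cases i <;>
        · simp [g7, eta1, Ke1, Ke2, Ke3, Kalpha, Kalphabar, Matrix.mulVec,
            dotProduct, Fin.sum_univ_three]
          first
          | linear_combination (-1/14 : ℂ) * Complex.I^2 * hs2 + (-1/2 : ℂ) * Complex.I_sq
          | linear_combination (-11/56 : ℂ) * Complex.I^2 * hs2 + (-11/8 : ℂ) * Complex.I_sq
          | linear_combination (-9/28 : ℂ) * Complex.I^2 * hs2 + (-9/4 : ℂ) * Complex.I_sq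
    rw [hd]
    have h1 : Ke1 ∈ LambdaZ := Submodule.subset_span (by simp)
    have h3 : Ke3 ∈ LambdaZ := Submodule.subset_span (by simp)
    have h4 : Kalpha • Ke1 ∈ LambdaZ := Submodule.subset_span (by simp)
    have h5 : Kalpha • Ke2 ∈ LambdaZ := Submodule.subset_span (by simp)
    exact add_mem (add_mem (add_mem (zsmul_mem h1 (-1)) h3) h4) h5
  · intro hmem
    have key : ∀ x ∈ LambdaZ, ∃ n : ℤ, psi x = 7 * n := by
      intro x hx
      refine Submodule.span_induction ?_ ?_ ?_ ?_ hx
      · rintro g (rfl | rfl | rfl | rfl | rfl | rfl)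
        · exact ⟨0, by simp [psi, Ke1]⟩
        · exact ⟨0, by simp [psi, Ke2]⟩
        · exact ⟨1, by simp [psi, Ke3]⟩
        · exact ⟨0, by simp [psi, Ke1]⟩
        · exact ⟨0, by simp [psi, Ke2]⟩
        · refine ⟨0, ?_⟩
          simp [psi, Ke3, Kalpha, Complex.mul_re, Complex.mul_im]
          ring_nf
          rw [Real.sq_sqrt (by norm_num : (0:ℝ) ≤ 7)]
          ring
      · exact ⟨0, by simp [psi]⟩
      · rintro x y - - ⟨m, hm⟩ ⟨n, hn⟩
        exact ⟨m + n, by rw [psi_add, hm, hn]; push_cast; ring⟩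
      · rintro a x - ⟨m, hm⟩
        exact ⟨a * m, by rw [psi_zsmul, hm]; push_cast; ring⟩
    obtain ⟨n, hn⟩ := key eta1 hmem
    have heta : psi eta1 = -1 := by
      simp [psi, eta1]
      rw [← mul_div_assoc, Real.mul_self_sqrt (by norm_num : (0:ℝ) ≤ 7)]
      norm_num
    rw [heta] at hn
    have : (7 : ℤ) * n = -1 := by exact_mod_cast hn.symm
    omega

end
end
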